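/- Let T be a triangulation of P(n,k) = (Δ_{n−1})^k with a factorwise-dual-Sperner labeling ℓ : V(T) → [n]^k. Then there exists an equivalent factorwise-dual-Sperner labeling ℓ' of T which is a Sperner labeling of the polytope P(n,k) (vertices of P(n,k) get distinct labels and every vertex of T gets a label occurring among the vertices of the minimal face of P(n,k) containing it). -/

import Mathlib

open Finset

open Fin.NatCast Fin.CommRing in
lemma exists_pick {n : ℕ} [NeZero n] (x : Fin n → ℝ) (h0 : ∃ j, x j = 0)
    (h1 : ∃ j, x j ≠ 0) : ∃ j, x j ≠ 0 ∧ x (j + 1) = 0 := by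
  by_contra hc
  push_neg at hc
  obtain ⟨j1, hj1⟩ := h1
  obtain ⟨j0, hj0⟩ := h0
  have key : ∀ m : ℕ, x (j1 + (m : Fin n)) ≠ 0 := by
    intro m
    induction m with
    | zero => simpa using hj1
    | succ m ih =>
      have h2 : (j1 + ((m + 1 : ℕ) : Fin n)) = (j1 + (m : Fin n)) + 1 := by
        push_cast; ring
      rw [h2]
      exact hc _ ih
  have he : j0 = j1 + (((j0 - j1).val : ℕ) : Fin n) := by
    rw [Fin.cast_val_eq_self]; ring
  rw [he] at hj0
  exact key _ hj0


/-- The vertex of `P(n,k) = (Δ_{n-1})^k` indexed by `w ∈ [n]^k`. -/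
def vertPt (n k : ℕ) (w : Fin k → Fin n) : Fin k → Fin n → ℝ :=
  fun i j => if j = w i then 1 else 0

/-- A labeling `ℓ` of a set `Vs` of points of `P(n,k)` is *factorwise-dual-Sperner* if,
whenever `empty(v_i) = [n] \ supp(v_i)` is nonempty, `ℓ_i(v) ∈ empty(v_i)`. -/
def IsFDSLabeling (n k : ℕ) (Vs : Set (Fin k → Fin n → ℝ))
    (ℓ : (Fin k → Fin n → ℝ) → (Fin k → Fin n)) : Prop :=
  ∀ v ∈ Vs, ∀ i, (∃ j, v i j = 0) → v i (ℓ v i) = 0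

/-- Two labelings are *equivalent* if they agree in coordinate `i` at `v` whenever
`empty(v_i) = ∅`, i.e. whenever `v_i` has full support. -/
def EquivLabeling (n k : ℕ) (Vs : Set (Fin k → Fin n → ℝ))
    (ℓ ℓ' : (Fin k → Fin n → ℝ) → (Fin k → Fin n)) : Prop :=
  ∀ v ∈ Vs, ∀ i, (∀ j, v i j ≠ 0) → ℓ' v i = ℓ v i

/-- Every factorwise-dual-Sperner labeling of a triangulation `T` of `P(n,k)` has an
equivalent factorwise-dual-Sperner labeling `ℓ'` which is a Sperner labeling of the polytope:
the vertices of `P(n,k)` receive pairwise distinct labels, and every vertex `v` of `T` gets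
the label of some vertex `w` of the minimal face of `P(n,k)` containing `v` (i.e. some `w`
with `supp(w_i) ⊆ supp(v_i)` for all `i`). -/
theorem fds_to_sperner (n k : ℕ) (hn : 0 < n) (hk : 0 < k)
    (K : Geometry.SimplicialComplex ℝ (Fin k → Fin n → ℝ))
    (hK : K.space = {x : Fin k → Fin n → ℝ | ∀ i, x i ∈ stdSimplex ℝ (Fin n)})
    (ℓ : (Fin k → Fin n → ℝ) → (Fin k → Fin n))
    (hℓ : IsFDSLabeling n k K.vertices ℓ) :
    ∃ ℓ' : (Fin k → Fin n → ℝ) → (Fin k → Fin n),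
      IsFDSLabeling n k K.vertices ℓ' ∧
      EquivLabeling n k K.vertices ℓ ℓ' ∧
      Function.Injective (fun w : Fin k → Fin n => ℓ' (vertPt n k w)) ∧
      ∀ v ∈ K.vertices, ∃ w : Fin k → Fin n,
        (∀ i, v i (w i) ≠ 0) ∧ ℓ' v = ℓ' (vertPt n k w) := by
  classical
  haveI : NeZero n := ⟨hn.ne'⟩
  -- vertices lie in the product of simplices
  have hsimp : ∀ v ∈ K.vertices, ∀ i, v i ∈ stdSimplex ℝ (Fin n) := by
    intro v hv i
    have := K.vertices_subset_space hv
    rw [hK] at this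
    exact this i
  have hnz : ∀ v ∈ K.vertices, ∀ i, ∃ j, v i j ≠ 0 := by
    intro v hv i
    by_contra h
    push_neg at h
    have hs := (hsimp v hv i).2
    simp only [h] at hs
    simp at hs
  -- the new labeling
  set ℓ' : (Fin k → Fin n → ℝ) → (Fin k → Fin n) :=
    fun v i =>
      if h : (∃ j, v i j = 0) ∧ (∃ j, v i j ≠ 0) then
        Classical.choose (exists_pick (v i) h.1 h.2) + 1
      else ℓ v i with hℓ'def
  refine ⟨ℓ', ?_, ?_, ?_, ?_⟩
  · -- FDS
    intro v hv i h0
    by_cases h1 : ∃ j, v i j ≠ 0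
    · have hc : (∃ j, v i j = 0) ∧ (∃ j, v i j ≠ 0) := ⟨h0, h1⟩
      have : ℓ' v i = Classical.choose (exists_pick (v i) hc.1 hc.2) + 1 := by
        simp only [hℓ'def, dif_pos hc]
      rw [this]
      exact (Classical.choose_spec (exists_pick (v i) hc.1 hc.2)).2
    · push_neg at h1
      apply h1
  · -- equivalence
    intro v hv i h
    have hc : ¬ ((∃ j, v i j = 0) ∧ (∃ j, v i j ≠ 0)) := by
      rintro ⟨⟨j, hj⟩, -⟩
      exact h j hj
    simp only [hℓ'def, dif_neg hc]
  · -- injectivity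
    rcases Nat.lt_or_ge n 2 with h2 | h2
    · intro a b _
      haveI : Subsingleton (Fin n) := by
        interval_cases n
        exact Fin.subsingleton_one
      exact Subsingleton.elim a b
    · haveI : Nontrivial (Fin n) := Fin.nontrivial_iff_two_le.mpr h2
      have hvert : ∀ w : Fin k → Fin n, ∀ i, ℓ' (vertPt n k w) i = w i + 1 := by
        intro w i
        obtain ⟨j, hj⟩ := exists_ne (w i)
        have hc : (∃ j, vertPt n k w i j = 0) ∧ (∃ j, vertPt n k w i j ≠ 0) := by
          constructor
          · exact ⟨j, by simp [vertPt, hj]⟩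
          · exact ⟨w i, by simp [vertPt]⟩
        have heq : ℓ' (vertPt n k w) i
            = Classical.choose (exists_pick (vertPt n k w i) hc.1 hc.2) + 1 := by
          simp only [hℓ'def, dif_pos hc]
        have hspec := (Classical.choose_spec (exists_pick (vertPt n k w i) hc.1 hc.2)).1
        have : Classical.choose (exists_pick (vertPt n k w i) hc.1 hc.2) = w i := by
          by_contra hne
          exact hspec (by simp only [vertPt]; exact if_neg hne)
        rw [heq, this]
      intro a b hab
      funext i
      have h3 : ℓ' (vertPt n k a) i = ℓ' (vertPt n k b) i := congrFun hab i
      rw [hvert a i, hvert b i] at h3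
      exact add_right_cancel h3
  · -- Sperner condition
    intro v hv
    rcases Nat.lt_or_ge n 2 with h2 | h2
    · haveI : Subsingleton (Fin n) := by
        interval_cases n
        exact Fin.subsingleton_one
      refine ⟨fun _ => 0, fun i => ?_, ?_⟩
      · obtain ⟨j, hj⟩ := hnz v hv i
        rwa [Subsingleton.elim j 0] at hj
      · exact Subsingleton.elim _ _
    · haveI : Nontrivial (Fin n) := Fin.nontrivial_iff_two_le.mpr h2
      have hvert : ∀ w : Fin k → Fin n, ∀ i, ℓ' (vertPt n k w) i = w i + 1 := by
        intro w i
        obtain ⟨j, hj⟩ := exists_ne (w i)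
        have hc : (∃ j, vertPt n k w i j = 0) ∧ (∃ j, vertPt n k w i j ≠ 0) := by
          constructor
          · exact ⟨j, by simp [vertPt, hj]⟩
          · exact ⟨w i, by simp [vertPt]⟩
        have heq : ℓ' (vertPt n k w) i
            = Classical.choose (exists_pick (vertPt n k w i) hc.1 hc.2) + 1 := by
          simp only [hℓ'def, dif_pos hc]
        have hspec := (Classical.choose_spec (exists_pick (vertPt n k w i) hc.1 hc.2)).1
        have : Classical.choose (exists_pick (vertPt n k w i) hc.1 hc.2) = w i := by
          by_contra hne
          exact hspec (by simp only [vertPt]; exact if_neg hne)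
        rw [heq, this]
      refine ⟨fun i =>
        if h : (∃ j, v i j = 0) ∧ (∃ j, v i j ≠ 0) then
          Classical.choose (exists_pick (v i) h.1 h.2)
        else ℓ v i - 1, fun i => ?_, ?_⟩
      · by_cases h : (∃ j, v i j = 0) ∧ (∃ j, v i j ≠ 0)
        · simp only [dif_pos h]
          exact (Classical.choose_spec (exists_pick (v i) h.1 h.2)).1
        · simp only [dif_neg h]
          have h0 : ¬ ∃ j, v i j = 0 := fun h0 => h ⟨h0, hnz v hv i⟩
          push_neg at h0
          exact h0 _
      · funext i
        rw [hvert]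
        by_cases h : (∃ j, v i j = 0) ∧ (∃ j, v i j ≠ 0)
        · simp only [hℓ'def, dif_pos h]
        · simp only [hℓ'def, dif_neg h, dif_neg h]
          rw [sub_add_cancel]
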